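/- Assume the constant C_Γ in the definition of B_D is large enough, depending only on n. Let D be a v-cube with ℓ(D) = 2^{−j} (j ∈ ℤ), let x ∈ supp μ ∩ D, let 2^{−j−1} ≤ ε ≤ δ < 2^{−j}, and let σ := c H^n_L for any constant c ≥ 0 and any n-plane L in ℝ^d. Then |∫ (φ_ε(x−y) − φ_δ(x−y)) K(x−y) d(μ−σ)(y)| ≤ C 2^{j(n+2)} (δ−ε) dist_{B_D}(μ, σ), where C depends only on n, d, K and φ_ℝ. -/

import Mathlib

open MeasureTheory Set Filter ENNReal NNReal

noncomputable section

/-- Euclidean space `ℝ^k`. -/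
abbrev Euc (k : ℕ) : Type := EuclideanSpace ℝ (Fin k)

/-- Projection `x ↦ x̃` onto the first `n` coordinates. -/
def projn (n d : ℕ) (h : n ≤ d) (x : Euc d) : Euc n := WithLp.toLp 2 (fun i => x (Fin.castLE h i))

/-- An odd Calderón–Zygmund kernel of homogeneity `-n` on `ℝ^d`, with constant `CK`. -/
structure IsCZKernel (n d : ℕ) (CK : ℝ) (K : Euc d → ℝ) : Prop where
  pos : 0 < CK
  odd : ∀ x : Euc d, K (-x) = -K x
  diff : ∀ x : Euc d, x ≠ 0 → DifferentiableAt ℝ K x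
  diff2 : ∀ x : Euc d, x ≠ 0 → DifferentiableAt ℝ (fderiv ℝ K) x
  bound : ∀ x : Euc d, x ≠ 0 → |K x| ≤ CK / ‖x‖ ^ n
  fderiv_bound : ∀ x : Euc d, x ≠ 0 → ‖fderiv ℝ K x‖ ≤ CK / ‖x‖ ^ (n + 1)
  fderiv2_bound : ∀ x : Euc d, x ≠ 0 → ‖fderiv ℝ (fderiv ℝ K) x‖ ≤ CK / ‖x‖ ^ (n + 2)

/-- The smooth truncation profile `φ_ℝ`: a nondecreasing `C²` function with
`χ_{[3√n,∞)} ≤ φ_ℝ ≤ χ_{[2.1√n,∞)}` (extended by `0` to all of `ℝ`). -/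
structure IsCutoff (n : ℕ) (φR : ℝ → ℝ) : Prop where
  mono : Monotone φR
  smooth : ContDiff ℝ 2 φR
  nonneg : ∀ t : ℝ, 0 ≤ φR t
  le_one : ∀ t : ℝ, φR t ≤ 1
  eq_zero : ∀ t : ℝ, t < 2.1 * Real.sqrt n → φR t = 0
  eq_one : ∀ t : ℝ, 3 * Real.sqrt n ≤ t → φR t = 1

/-- `φ_ε(x) = φ_ℝ(|x̃|/ε)`. -/
def phiE (n d : ℕ) (h : n ≤ d) (φR : ℝ → ℝ) (ε : ℝ) (x : Euc d) : ℝ :=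
  φR (‖projn n d h x‖ / ε)

/-- The map `u ↦ (u, A u)` from `ℝⁿ` to `ℝ^d`. -/
def graphMap (n d : ℕ) (h : n ≤ d) (A : Euc n → Euc (d - n)) (u : Euc n) : Euc d :=
  WithLp.toLp 2 (fun i : Fin d => if hi : (i : ℕ) < n then u ⟨i, hi⟩
           else A u ⟨(i : ℕ) - n, by have := i.isLt; omega⟩)

/-- The graph `Γ` of `A`. -/
def graphSet (n d : ℕ) (h : n ≤ d) (A : Euc n → Euc (d - n)) : Set (Euc d) :=
  Set.range (graphMap n d h A)

/-- `H^n` restricted to the graph of `A`. -/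
def graphMeasure (n d : ℕ) (h : n ≤ d) (A : Euc n → Euc (d - n)) : Measure (Euc d) :=
  (μH[(n : ℝ)]).restrict (graphSet n d h A)

/-- The measure `f · H^n_Γ`. -/
def lipGraphMeasure (n d : ℕ) (h : n ≤ d) (A : Euc n → Euc (d - n)) (f : Euc d → ℝ) :
    Measure (Euc d) :=
  (graphMeasure n d h A).withDensity fun y => ENNReal.ofReal (f y)

/-- The smoothly truncated singular integral `T^ν_{φ_ε} f(x) = ∫ φ_ε(x-y) K(x-y) f(y) dν(y)`. -/
def Tphi (n d : ℕ) (h : n ≤ d) (φR : ℝ → ℝ) (K : Euc d → ℝ) (ν : Measure (Euc d))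
    (f : Euc d → ℝ) (ε : ℝ) (x : Euc d) : ℝ :=
  ∫ y, phiE n d h φR ε (x - y) * K (x - y) * f y ∂ν

/-- The `ρ`-variation of a family `G = {G ε}_{ε > 0}`. -/
def varRho (ρ : ℝ) (G : ℝ → ℝ) : ℝ≥0∞ :=
  ⨆ (ε : ℤ → ℝ) (_ : Antitone ε) (_ : ∀ m : ℤ, 0 < ε m),
    (∑' m : ℤ, (ENNReal.ofReal |G (ε (m + 1)) - G (ε m)|) ^ ρ) ^ (1 / ρ)

/-- The oscillation of a family `G = {G ε}_{ε > 0}` with respect to a fixed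
sequence `r`. -/
def oscO (r : ℤ → ℝ) (G : ℝ → ℝ) : ℝ≥0∞ :=
  ⨆ (ε : ℤ → ℝ) (δ : ℤ → ℝ)
    (_ : ∀ m : ℤ, r (m + 1) ≤ ε m ∧ ε m ≤ δ m ∧ δ m ≤ r m),
    (∑' m : ℤ, (ENNReal.ofReal |G (ε m) - G (δ m)|) ^ (2 : ℝ)) ^ (1 / 2 : ℝ)

/-- The `λ`-jump counting function of a family `G = {G ε}_{ε > 0}`. -/
def jumpN (lam : ℝ) (G : ℝ → ℝ) : ℝ≥0∞ :=
  ⨆ (N : ℕ) (_ : ∃ ε δ : ℕ → ℝ,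
      (∀ i, i < N → 0 < ε i) ∧ (∀ i, i < N → ε i < δ i) ∧
      (∀ i, i + 1 < N → δ i ≤ ε (i + 1)) ∧
      (∀ i, i < N → lam < |G (ε i) - G (δ i)|)), (N : ℝ≥0∞)

/-- The `ρ`-variation of a `ℤ`-indexed family. -/
def varRhoZ (ρ : ℝ) (G : ℤ → ℝ) : ℝ≥0∞ :=
  ⨆ (mk : ℤ → ℤ) (_ : Antitone mk),
    (∑' k : ℤ, (ENNReal.ofReal |G (mk (k + 1)) - G (mk k)|) ^ ρ) ^ (1 / ρ)

/-- The oscillation of a `ℤ`-indexed family with respect to a fixed integer sequence `r`. -/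
def oscZ (r : ℤ → ℤ) (G : ℤ → ℝ) : ℝ≥0∞ :=
  ⨆ (ε : ℤ → ℤ) (δ : ℤ → ℤ)
    (_ : ∀ m : ℤ, r (m + 1) ≤ ε m ∧ ε m ≤ δ m ∧ δ m ≤ r m),
    (∑' m : ℤ, (ENNReal.ofReal |G (ε m) - G (δ m)|) ^ (2 : ℝ)) ^ (1 / 2 : ℝ)

/-- A cube `a + [0,b)^n ⊆ ℝⁿ`. -/
def cubeSet (n : ℕ) (a : Euc n) (b : ℝ) : Set (Euc n) :=
  {u | ∀ i : Fin n, a i ≤ u i ∧ u i < a i + b}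

/-- A "vertical" cube `D = D̃ × ℝ^{d-n}`, `D̃` a cube of `ℝⁿ`. -/
def IsVCube (n d : ℕ) (h : n ≤ d) (D : Set (Euc d)) : Prop :=
  ∃ (a : Euc n) (b : ℝ), 0 < b ∧ D = {x : Euc d | projn n d h x ∈ cubeSet n a b}

/-- The half-open v-cube with center `z` (in `ℝⁿ`) and side length `ℓ`. -/
def vQ (n d : ℕ) (h : n ≤ d) (z : Euc n) (ℓ : ℝ) : Set (Euc d) :=
  {x : Euc d | ∀ i : Fin n,
    z i - ℓ / 2 ≤ projn n d h x i ∧ projn n d h x i < z i + ℓ / 2}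

/-- The cylinder `B(z̃_Q, C_Γ ℓ(Q)) × ℝ^{d-n}` associated with the v-cube of center `z`
and side length `ℓ`. -/
def BQ (n d : ℕ) (h : n ≤ d) (CΓ : ℝ) (z : Euc n) (ℓ : ℝ) : Set (Euc d) :=
  {x : Euc d | dist (projn n d h x) z ≤ CΓ * ℓ}

/-- The grid cube `D_m^a = (a + [0, 2^{-m})^n) × ℝ^{d-n}`. -/
def Dgrid (n d : ℕ) (h : n ≤ d) (a : Euc n) (m : ℤ) : Set (Euc d) :=
  {x : Euc d | projn n d h x ∈ cubeSet n a ((2 : ℝ) ^ (-m))}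

/-- The center of the dyadic cube `2^{-m}(k + [0,1)^n)`. -/
def dyadicCenter (n : ℕ) (m : ℤ) (k : Fin n → ℤ) : Euc n :=
  WithLp.toLp 2 (fun i => ((k i : ℝ) + 1 / 2) * (2 : ℝ) ^ (-m))

/-- `∫_{D^c} K(z-y) dν(y)`, understood as `lim_{M→∞} ∫_{D^c ∩ {|z-y|<M}} K(z-y) dν(y)`. -/
def Ktail (d : ℕ) (K : Euc d → ℝ) (ν : Measure (Euc d)) (D : Set (Euc d)) (z : Euc d) : ℝ :=
  limUnder atTop fun M : ℝ => ∫ y in Dᶜ ∩ Metric.ball z M, K (z - y) ∂ν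

/-- `E_D ν = ν(D)⁻¹ ∫_D ∫_{D^c} K(z-y) dν(y) dν(z)`. -/
def cubeAvg (d : ℕ) (K : Euc d → ℝ) (ν : Measure (Euc d)) (D : Set (Euc d)) : ℝ :=
  ((ν D).toReal)⁻¹ * ∫ z in D, Ktail d K ν D z ∂ν

/-- The averaged martingale `E_m ν(x) = 2^{mn} ∫_{{a : x ∈ D_m^a}} E_{D_m^a} ν da`. -/
def Em (n d : ℕ) (h : n ≤ d) (K : Euc d → ℝ) (ν : Measure (Euc d)) (m : ℤ) (x : Euc d) : ℝ :=
  (2 : ℝ) ^ (m * (n : ℤ)) *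
    ∫ a in {a : Euc n | x ∈ Dgrid n d h a m},
      cubeAvg d K ν (Dgrid n d h a m) ∂(volume : Measure (Euc n))

/-- `Λ_m^ν(x,z;y) = 2^{mn} ∫_{{a : x,z ∈ D_m^a, y ∉ D_m^a}} ν(D_m^a)⁻¹ da`. -/
def LambdaM (n d : ℕ) (h : n ≤ d) (ν : Measure (Euc d)) (m : ℤ) (x z y : Euc d) : ℝ :=
  (2 : ℝ) ^ (m * (n : ℤ)) *
    ∫ a in {a : Euc n |
        x ∈ Dgrid n d h a m ∧ z ∈ Dgrid n d h a m ∧ y ∉ Dgrid n d h a m},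
      ((ν (Dgrid n d h a m)).toReal)⁻¹ ∂(volume : Measure (Euc n))

/-- The doubly truncated maximal singular integral
`T_*ν(x) = sup_{0<ε<M} |∫_{ε<|x-y|<M} K(x-y) dν(y)|`. -/
def Tstar (d : ℕ) (K : Euc d → ℝ) (ν : Measure (Euc d)) (x : Euc d) : ℝ≥0∞ :=
  ⨆ (ε : ℝ) (M : ℝ) (_ : 0 < ε) (_ : ε < M),
    ENNReal.ofReal |∫ y in {y : Euc d | ε < dist x y ∧ dist x y < M}, K (x - y) ∂ν|

/-- `(Kφ_ε ∗ ν)(x)`, understood as `lim_{M→∞} ∫_{|x-y|<M} φ_ε(x-y) K(x-y) dν(y)`. -/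
def KphiM (n d : ℕ) (h : n ≤ d) (φR : ℝ → ℝ) (K : Euc d → ℝ) (ν : Measure (Euc d))
    (ε : ℝ) (x : Euc d) : ℝ :=
  limUnder atTop fun M : ℝ =>
    ∫ y in Metric.ball x M, phiE n d h φR ε (x - y) * K (x - y) ∂ν

/-- An (affine) `n`-plane in `ℝ^d`. -/
def IsNPlane (n d : ℕ) (L : Set (Euc d)) : Prop :=
  ∃ (p : Euc d) (φ : Euc n →ₗᵢ[ℝ] Euc d), L = Set.range fun u => p + φ u

/-- The localized Wasserstein-type distance
`dist_F(σ,ν) = sup {|∫ g dσ - ∫ g dν| : Lip(g) ≤ 1, supp g ⊆ F}`. -/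
def wdist (d : ℕ) (F : Set (Euc d)) (σ ν : Measure (Euc d)) : ℝ≥0∞ :=
  ⨆ (g : Euc d → ℝ) (_ : LipschitzWith 1 g) (_ : Function.support g ⊆ F),
    ENNReal.ofReal |(∫ y, g y ∂σ) - ∫ y, g y ∂ν|

/-- The (topological) support of a measure. -/
def msupport (d : ℕ) (μ : Measure (Euc d)) : Set (Euc d) :=
  {x : Euc d | ∀ U : Set (Euc d), IsOpen U → x ∈ U → 0 < μ U}

open Classical in
/-- The coefficient `α_μ(Q)` of the v-cube `Q` with center `z` and side length `ℓ`. -/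
def alphaC (n d : ℕ) (h : n ≤ d) (CΓ : ℝ) (μ : Measure (Euc d)) (z : Euc n) (ℓ : ℝ) :
    ℝ≥0∞ :=
  if vQ n d h z ℓ ∩ msupport d μ = ∅ then 0
  else (ENNReal.ofReal (ℓ ^ (n + 1)))⁻¹ *
    ⨅ (c : ℝ≥0) (L : Set (Euc d)) (_ : IsNPlane n d L),
      wdist d (BQ n d h CΓ z ℓ) μ ((c : ℝ≥0∞) • (μH[(n : ℝ)]).restrict L)

/-- The coefficient `β_{2,μ}(Q)` of the v-cube `Q` with center `z` and side length `ℓ`. -/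
def beta2 (n d : ℕ) (h : n ≤ d) (CΓ : ℝ) (μ : Measure (Euc d)) (z : Euc n) (ℓ : ℝ) :
    ℝ≥0∞ :=
  ⨅ (L : Set (Euc d)) (_ : IsNPlane n d L),
    ((ENNReal.ofReal (ℓ ^ n))⁻¹ *
      ∫⁻ y in vQ n d h z (CΓ * ℓ),
        ENNReal.ofReal ((Metric.infDist y L / ℓ) ^ 2) ∂μ) ^ (1 / 2 : ℝ)

/-- The average `m_Q(g) = μ(Q)⁻¹ ∫_Q g dμ`. -/
def mAvg (d : ℕ) (μ : Measure (Euc d)) (Q : Set (Euc d)) (g : Euc d → ℝ) : ℝ :=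
  ((μ Q).toReal)⁻¹ * ∫ y in Q, g y ∂μ

/-- The Hardy–Littlewood maximal operator over v-cubes. -/
def maxHL (n d : ℕ) (h : n ≤ d) (μ : Measure (Euc d)) (g : Euc d → ℝ) (x : Euc d) : ℝ≥0∞ :=
  ⨆ (Q : Set (Euc d)) (_ : IsVCube n d h Q) (_ : x ∈ Q),
    ENNReal.ofReal (mAvg d μ Q fun y => |g y|)

/-- The sharp maximal operator over v-cubes. -/
def maxSharp (n d : ℕ) (h : n ≤ d) (μ : Measure (Euc d)) (g : Euc d → ℝ) (x : Euc d) :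
    ℝ≥0∞ :=
  ⨆ (Q : Set (Euc d)) (_ : IsVCube n d h Q) (_ : x ∈ Q),
    ENNReal.ofReal (mAvg d μ Q fun y => |g y - mAvg d μ Q g|)

/-- The centered Hardy–Littlewood maximal operator `M^ν`. -/
def maxB (d : ℕ) (ν : Measure (Euc d)) (f : Euc d → ℝ) (x : Euc d) : ℝ≥0∞ :=
  ⨆ (r : ℝ) (_ : 0 < r),
    (ν (Metric.ball x r))⁻¹ * ∫⁻ y in Metric.ball x r, ENNReal.ofReal |f y| ∂ν

lemma aux_two_point {f : ℝ → ℝ} (hf : Differentiable ℝ f) {C : ℝ}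
    (hC : ∀ t, |deriv f t| ≤ C) (a b : ℝ) : |f a - f b| ≤ C * |a - b| := by
  have := Convex.norm_image_sub_le_of_norm_deriv_le (s := Set.univ)
    (fun x _ => hf x) (fun x _ => by simpa [Real.norm_eq_abs] using hC x)
    convex_univ (Set.mem_univ b) (Set.mem_univ a)
  simpa [Real.norm_eq_abs] using this

lemma projn_sub (n d : ℕ) (h : n ≤ d) (x y : Euc d) :
    projn n d h (x - y) = projn n d h x - projn n d h y := by
  ext i; simp [projn]

lemma projn_norm_le (n d : ℕ) (h : n ≤ d) (x : Euc d) : ‖projn n d h x‖ ≤ ‖x‖ := by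
  rw [EuclideanSpace.norm_eq, EuclideanSpace.norm_eq]
  apply Real.sqrt_le_sqrt
  have hinj : Function.Injective (Fin.castLE h) := Fin.castLE_injective h
  calc ∑ i : Fin n, ‖projn n d h x i‖ ^ 2
      = ∑ j ∈ Finset.univ.image (Fin.castLE h), ‖x j‖ ^ 2 := by
        rw [Finset.sum_image (fun a _ b _ hab => hinj hab)]; rfl
    _ ≤ ∑ j : Fin d, ‖x j‖ ^ 2 :=
        Finset.sum_le_sum_of_subset_of_nonneg (Finset.subset_univ _)
          (fun j _ _ => by positivity)

lemma euc_norm_le_of_coord {n : ℕ} (v : Euc n) {a : ℝ} (ha : 0 ≤ a)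
    (hv : ∀ i, |v i| ≤ a) : ‖v‖ ≤ Real.sqrt n * a := by
  rw [EuclideanSpace.norm_eq]
  have h1 : ∑ i : Fin n, ‖v i‖ ^ 2 ≤ (n : ℝ) * a ^ 2 := by
    calc ∑ i : Fin n, ‖v i‖ ^ 2 ≤ ∑ _i : Fin n, a ^ 2 := by
          refine Finset.sum_le_sum fun i _ => ?_
          rw [Real.norm_eq_abs]
          exact pow_le_pow_left₀ (abs_nonneg _) (hv i) 2
      _ = (n : ℝ) * a ^ 2 := by simp [Finset.sum_const]
  calc Real.sqrt (∑ i : Fin n, ‖v i‖ ^ 2) ≤ Real.sqrt ((n : ℝ) * a ^ 2) :=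
        Real.sqrt_le_sqrt h1
    _ = Real.sqrt n * a := by
        rw [Real.sqrt_mul (by positivity), Real.sqrt_sq ha]

set_option maxHeartbeats 2000000 in
/-- (Estimate (5.4).) For `C_Γ` large enough (depending only on `n`), a
v-cube `D` of side `2^{-j}`, `x ∈ supp μ ∩ D`, `2^{-j-1} ≤ ε ≤ δ < 2^{-j}` and a flat
measure `σ = c H^n_L`,
`|∫ (φ_ε − φ_δ)(x−y) K(x−y) d(μ−σ)(y)| ≤ C 2^{j(n+2)} (δ−ε) dist_{B_D}(μ,σ)`, with `C`
depending only on `n, d, K, φ_ℝ`. -/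
theorem short_variation_term_bound
    (n d : ℕ) (hn : 0 < n) (hnd : n < d)
    (CK : ℝ) (K : Euc d → ℝ) (hK : IsCZKernel n d CK K)
    (φR : ℝ → ℝ) (hφ : IsCutoff n φR)
    (C₀ : ℝ) (hC₀ : 0 < C₀) (LA : ℝ≥0) :
    ∃ CΓ₀ C : ℝ, 0 < CΓ₀ ∧ 0 < C ∧
      ∀ CΓ : ℝ, CΓ₀ ≤ CΓ →
        ∀ (aP : Euc n) (bP : ℝ), 0 < bP →
          ∀ (A : Euc n → Euc (d - n)), LipschitzWith LA A →
            Function.support A ⊆ cubeSet n aP bP →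
            ∀ f : Euc d → ℝ, Measurable f →
              (∀ x : Euc d, projn n d hnd.le x ∉ cubeSet n aP bP → f x = 1) →
              (∀ x : Euc d, projn n d hnd.le x ∈ cubeSet n aP bP → C₀⁻¹ ≤ f x ∧ f x ≤ C₀) →
              ∀ (j : ℤ) (z : Euc n) (x : Euc d),
                x ∈ msupport d (lipGraphMeasure n d hnd.le A f) →
                x ∈ vQ n d hnd.le z ((2 : ℝ) ^ (-j)) →
                ∀ ε δ : ℝ, (2 : ℝ) ^ (-j - 1) ≤ ε → ε ≤ δ → δ < (2 : ℝ) ^ (-j) →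
                  ∀ (c : ℝ≥0) (L : Set (Euc d)), IsNPlane n d L →
                    ENNReal.ofReal
                        |(∫ y, (phiE n d hnd.le φR ε (x - y) -
                              phiE n d hnd.le φR δ (x - y)) * K (x - y)
                            ∂(lipGraphMeasure n d hnd.le A f)) -
                          ∫ y, (phiE n d hnd.le φR ε (x - y) -
                              phiE n d hnd.le φR δ (x - y)) * K (x - y)
                            ∂((c : ℝ≥0∞) • (μH[(n : ℝ)]).restrict L)|
                      ≤ ENNReal.ofReal (C * (2 : ℝ) ^ (j * ((n : ℤ) + 2)) * (δ - ε)) *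
                          wdist d (BQ n d hnd.le CΓ z ((2 : ℝ) ^ (-j)))
                            (lipGraphMeasure n d hnd.le A f)
                            ((c : ℝ≥0∞) • (μH[(n : ℝ)]).restrict L) := by
  classical
  set s : ℝ := Real.sqrt n with hs_def
  have hs1 : (1:ℝ) ≤ s := by
    rw [show (1:ℝ) = Real.sqrt 1 by simp]
    exact Real.sqrt_le_sqrt (by exact_mod_cast hn)
  have hs0 : 0 < s := lt_of_lt_of_le one_pos hs1
  have hφd : Differentiable ℝ φR := hφ.smooth.differentiable (by norm_num)
  have h2eq : (2 : WithTop ℕ∞) = 1 + 1 := by norm_num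
  have h21 : ContDiff ℝ 1 (deriv φR) :=
    (contDiff_succ_iff_deriv.mp (h2eq ▸ hφ.smooth)).2.2
  have hφd' : Differentiable ℝ (deriv φR) := h21.differentiable (by norm_num)
  have hφcont' : Continuous (deriv φR) := h21.continuous
  have h1eq : (1 : WithTop ℕ∞) = 0 + 1 := by norm_num
  have hφcont'' : Continuous (deriv (deriv φR)) :=
    ((contDiff_succ_iff_deriv.mp (h1eq ▸ h21)).2.2).continuous
  -- vanishing of derivatives of the cutoff
  have hd0a : ∀ t : ℝ, t ≤ 2.1 * s → deriv φR t = 0 := by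
    intro t ht
    have hval : φR t = 0 := by
      rcases lt_or_eq_of_le ht with h | h
      · exact hφ.eq_zero t h
      · have h0 : Set.EqOn φR (fun _ => (0:ℝ)) (Set.Iio (2.1 * s)) :=
          fun u hu => hφ.eq_zero u hu
        have hcl := h0.closure hφ.smooth.continuous continuous_const
        have ht' : t ∈ closure (Set.Iio (2.1*s)) := by
          rw [closure_Iio]; exact le_of_eq h
        exact hcl ht'
    have hmin : IsLocalMin φR t :=
      Filter.Eventually.of_forall fun u => by rw [hval]; exact hφ.nonneg u
    exact hmin.deriv_eq_zero
  have hd0b : ∀ t : ℝ, 3 * s ≤ t → deriv φR t = 0 := by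
    intro t ht
    have hmax : IsLocalMax φR t := Filter.Eventually.of_forall fun u => by
      rw [hφ.eq_one t ht]; exact hφ.le_one u
    exact hmax.deriv_eq_zero
  have hd20a : ∀ t : ℝ, t < 2.1 * s → deriv (deriv φR) t = 0 := by
    intro t ht
    have hev : deriv φR =ᶠ[nhds t] (fun _ => (0:ℝ)) :=
      Filter.eventuallyEq_of_mem (Iio_mem_nhds ht) (fun u hu => hd0a u (le_of_lt hu))
    rw [hev.deriv_eq]; exact deriv_const _ _
  have hd20b : ∀ t : ℝ, 3 * s < t → deriv (deriv φR) t = 0 := by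
    intro t ht
    have hev : deriv φR =ᶠ[nhds t] (fun _ => (0:ℝ)) :=
      Filter.eventuallyEq_of_mem (Ioi_mem_nhds ht) (fun u hu => hd0b u (le_of_lt hu))
    rw [hev.deriv_eq]; exact deriv_const _ _
  -- global bounds on the derivatives
  obtain ⟨C1', hC1'⟩ := (isCompact_Icc (a := (0:ℝ)) (b := 3*s)).exists_bound_of_continuousOn
    hφcont'.continuousOn
  obtain ⟨C2', hC2'⟩ := (isCompact_Icc (a := (0:ℝ)) (b := 3*s)).exists_bound_of_continuousOn
    hφcont''.continuousOn
  set C1 : ℝ := max C1' 0 with hC1def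
  set C2 : ℝ := max C2' 0 with hC2def
  have hC1nn : 0 ≤ C1 := le_max_right _ _
  have hC2nn : 0 ≤ C2 := le_max_right _ _
  have hB1 : ∀ t : ℝ, |deriv φR t| ≤ C1 := by
    intro t
    rcases lt_or_ge t 0 with h | h
    · rw [hd0a t (by nlinarith)]; simpa using hC1nn
    rcases le_or_gt t (3*s) with h' | h'
    · calc |deriv φR t| ≤ C1' := by
            simpa [Real.norm_eq_abs] using hC1' t ⟨h, h'⟩
        _ ≤ C1 := le_max_left _ _
    · rw [hd0b t h'.le]; simpa using hC1nn
  have hB2 : ∀ t : ℝ, |deriv (deriv φR) t| ≤ C2 := by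
    intro t
    rcases lt_or_ge t 0 with h | h
    · rw [hd20a t (by nlinarith)]; simpa using hC2nn
    rcases le_or_gt t (3*s) with h' | h'
    · calc |deriv (deriv φR) t| ≤ C2' := by
            simpa [Real.norm_eq_abs] using hC2' t ⟨h, h'⟩
        _ ≤ C2 := le_max_left _ _
    · rw [hd20b t h']; simpa using hC2nn
  -- the constants
  set Cc : ℝ := CK * (9*s*C1 + 3*s*C2 + C1) + 1 with hCcdef
  have hinner : 0 ≤ 9*s*C1 + 3*s*C2 + C1 := by nlinarith
  have hCcpos : 0 < Cc := by nlinarith [mul_nonneg hK.pos.le hinner]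
  refine ⟨4*s, Cc * 2^(n+2), by nlinarith, mul_pos hCcpos (by positivity), ?_⟩
  intro CΓ hCΓ aP bP hbP A hA hAsupp f hfm hf1 hf2 j z x hxsupp hxQ ε δ hε hεδ hδ c L hL
  rcases eq_or_lt_of_le hεδ with rfl | hlt
  · simp
  -- main case ε < δ
  set r : ℝ := (2:ℝ) ^ (-j - 1) with hrdef
  have hr : 0 < r := by rw [hrdef]; positivity
  have h2r : (2:ℝ) ^ (-j) = r * 2 := by
    rw [hrdef, ← zpow_add_one₀ (by norm_num : (2:ℝ) ≠ 0) (-j-1)]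
    congr 1; ring
  have hεr : r ≤ ε := hε
  have hεpos : 0 < ε := lt_of_lt_of_le hr hεr
  have hδpos : 0 < δ := lt_of_lt_of_le hεpos hεδ
  have hδr : δ < r * 2 := h2r ▸ hδ
  have hδε : 0 < δ - ε := sub_pos.mpr hlt
  -- the 1D profile difference
  set g1 : ℝ → ℝ := fun t => φR (t / ε) - φR (t / δ) with hg1def
  have hg1d : ∀ t : ℝ, HasDerivAt g1 (deriv φR (t/ε) * (1/ε) - deriv φR (t/δ) * (1/δ)) t := by
    intro t
    have h1 : HasDerivAt (fun u : ℝ => u / ε) (1/ε) t := by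
      simpa using (hasDerivAt_id t).div_const ε
    have h2 : HasDerivAt (fun u : ℝ => u / δ) (1/δ) t := by
      simpa using (hasDerivAt_id t).div_const δ
    exact ((hφd (t/ε)).hasDerivAt.comp t h1).sub ((hφd (t/δ)).hasDerivAt.comp t h2)
  have hg1_hi : ∀ t : ℝ, 3*s*δ ≤ t → g1 t = 0 := by
    intro t ht
    have h1 : 3*s ≤ t/ε := (le_div_iff₀ hεpos).mpr (by nlinarith [mul_nonneg hs0.le hδε.le])
    have h2 : 3*s ≤ t/δ := (le_div_iff₀ hδpos).mpr (by nlinarith)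
    simp [hg1def, hφ.eq_one _ h1, hφ.eq_one _ h2]
  have hg1_lo : ∀ t : ℝ, t < 2.1*s*ε → g1 t = 0 := by
    intro t ht
    have h1 : t/ε < 2.1*s := (div_lt_iff₀ hεpos).mpr (by nlinarith)
    have h2 : t/δ < 2.1*s := (div_lt_iff₀ hδpos).mpr (by nlinarith [mul_nonneg hs0.le hδε.le])
    simp [hg1def, hφ.eq_zero _ h1, hφ.eq_zero _ h2]
  set m1 : ℝ := 3*s*C1*(δ-ε)/r with hm1def
  have hm1nn : 0 ≤ m1 := div_nonneg (mul_nonneg (mul_nonneg (mul_nonneg (by norm_num) hs0.le) hC1nn) hδε.le) hr.le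
  have hg1_bdd : ∀ t : ℝ, |g1 t| ≤ m1 := by
    intro t
    rcases lt_or_ge t (2.1*s*ε) with h | h
    · rw [hg1_lo t h]; simpa using hm1nn
    rcases le_or_gt (3*s*δ) t with h' | h'
    · rw [hg1_hi t h']; simpa using hm1nn
    have ht0 : 0 ≤ t := le_trans (by nlinarith) h
    have key : |φR (t/ε) - φR (t/δ)| ≤ C1 * |t/ε - t/δ| := aux_two_point hφd hB1 _ _
    have hdd : t/δ ≤ t/ε := by
      apply div_le_div_of_nonneg_left ht0 hεpos hεδ
    have habs : |t/ε - t/δ| = t * (δ - ε) / (ε * δ) := by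
      rw [abs_of_nonneg (sub_nonneg.mpr hdd)]
      field_simp
    have e1 : |g1 t| ≤ C1 * (t * (δ-ε) / (ε*δ)) := by
      rw [hg1def]; rw [habs] at key; exact key
    have e2 : t * (δ-ε) / (ε*δ) ≤ 3*s*δ*(δ-ε) / (r*δ) := by
      apply div_le_div₀
        (mul_nonneg (mul_nonneg (mul_nonneg (by norm_num) hs0.le) hδpos.le) hδε.le)
        (mul_le_mul_of_nonneg_right h'.le hδε.le) (mul_pos hr hδpos)
        (mul_le_mul_of_nonneg_right hεr hδpos.le)
    have e3 : C1 * (3*s*δ*(δ-ε) / (r*δ)) = m1 := by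
      rw [hm1def]; field_simp
    calc |g1 t| ≤ C1 * (t * (δ-ε) / (ε*δ)) := e1
      _ ≤ C1 * (3*s*δ*(δ-ε) / (r*δ)) := mul_le_mul_of_nonneg_left e2 hC1nn
      _ = m1 := e3
  set m2 : ℝ := (3*s*C2 + C1)*(δ-ε)/(r*r) with hm2def
  have hm2nn : 0 ≤ m2 := div_nonneg (mul_nonneg (add_nonneg (mul_nonneg (mul_nonneg (by norm_num) hs0.le) hC2nn) hC1nn) hδε.le) (mul_nonneg hr.le hr.le)
  have hg1_deriv_bdd : ∀ t : ℝ, |deriv g1 t| ≤ m2 := by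
    intro t
    rw [(hg1d t).deriv]
    rcases lt_or_ge t 0 with h | h
    · have h1 : deriv φR (t/ε) = 0 := hd0a _ (by nlinarith [div_neg_of_neg_of_pos h hεpos])
      have h2 : deriv φR (t/δ) = 0 := hd0a _ (by nlinarith [div_neg_of_neg_of_pos h hδpos])
      rw [h1, h2]; simpa using hm2nn
    rcases le_or_gt (3*s*δ) t with h' | h'
    · have h1 : deriv φR (t/ε) = 0 := hd0b _ ((le_div_iff₀ hεpos).mpr (by nlinarith))
      have h2 : deriv φR (t/δ) = 0 := hd0b _ ((le_div_iff₀ hδpos).mpr (by nlinarith))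
      rw [h1, h2]; simpa using hm2nn
    -- 0 ≤ t < 3sδ
    have key1 : |deriv φR (t/ε) - deriv φR (t/δ)| ≤ C2 * |t/ε - t/δ| :=
      aux_two_point hφd' hB2 _ _
    have key2 : |deriv φR (t/δ)| ≤ C1 := hB1 _
    have hdd : t/δ ≤ t/ε := div_le_div_of_nonneg_left h hεpos hεδ
    have habs : |t/ε - t/δ| = t * (δ - ε) / (ε * δ) := by
      rw [abs_of_nonneg (sub_nonneg.mpr hdd)]
      field_simp
    have hexpr : deriv φR (t/ε) * (1/ε) - deriv φR (t/δ) * (1/δ)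
        = (deriv φR (t/ε) - deriv φR (t/δ)) * (1/ε) + deriv φR (t/δ) * (1/ε - 1/δ) := by
      ring
    rw [hexpr]
    have hie : (0:ℝ) ≤ 1/ε := by positivity
    have hsub : (1:ℝ)/ε - 1/δ = (δ-ε)/(ε*δ) := by field_simp
    have e1 : |(deriv φR (t/ε) - deriv φR (t/δ)) * (1/ε)|
        ≤ C2 * (t*(δ-ε)/(ε*δ)) * (1/ε) := by
      rw [abs_mul, abs_of_nonneg hie]
      apply mul_le_mul_of_nonneg_right _ hie
      rw [habs] at key1; exact key1
    have e2 : |deriv φR (t/δ) * (1/ε - 1/δ)| ≤ C1 * ((δ-ε)/(ε*δ)) := by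
      rw [abs_mul]
      have habs2 : |1/ε - 1/δ| = (δ-ε)/(ε*δ) := by
        rw [hsub, abs_of_nonneg (by positivity)]
      rw [habs2]
      exact mul_le_mul_of_nonneg_right key2 (by positivity)
    have b0 : C2 * (t*(δ-ε)/(ε*δ)) * (1/ε) = C2*(t*(δ-ε))/(ε*δ*ε) := by ring
    have b1 : C2*(t*(δ-ε))/(ε*δ*ε) ≤ C2*(3*s*δ*(δ-ε))/(r*δ*r) := by
      apply div_le_div₀
        (mul_nonneg hC2nn (mul_nonneg (mul_nonneg (mul_nonneg (by norm_num) hs0.le) hδpos.le) hδε.le))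
        (mul_le_mul_of_nonneg_left (mul_le_mul_of_nonneg_right h'.le hδε.le) hC2nn)
        (mul_pos (mul_pos hr hδpos) hr)
      calc r*δ*r ≤ ε*δ*r :=
            mul_le_mul_of_nonneg_right (mul_le_mul_of_nonneg_right hεr hδpos.le) hr.le
        _ ≤ ε*δ*ε := mul_le_mul_of_nonneg_left hεr (mul_nonneg hεpos.le hδpos.le)
    have b1' : C2*(3*s*δ*(δ-ε))/(r*δ*r) = 3*s*C2*(δ-ε)/(r*r) := by
      field_simp
    have b2 : C1*((δ-ε)/(ε*δ)) ≤ C1*(δ-ε)/(r*r) := by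
      rw [mul_div_assoc']
      apply div_le_div₀ (mul_nonneg hC1nn hδε.le) le_rfl (mul_pos hr hr)
      calc r*r ≤ ε*r := mul_le_mul_of_nonneg_right hεr hr.le
        _ ≤ ε*δ := mul_le_mul_of_nonneg_left (hεr.trans hεδ) hεpos.le
    have bsum : 3*s*C2*(δ-ε)/(r*r) + C1*(δ-ε)/(r*r) = m2 := by
      rw [hm2def]; field_simp
    calc |(deriv φR (t/ε) - deriv φR (t/δ)) * (1/ε) + deriv φR (t/δ) * (1/ε - 1/δ)|
        ≤ |(deriv φR (t/ε) - deriv φR (t/δ)) * (1/ε)| + |deriv φR (t/δ) * (1/ε - 1/δ)| :=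
          abs_add_le _ _
      _ ≤ C2 * (t*(δ-ε)/(ε*δ)) * (1/ε) + C1 * ((δ-ε)/(ε*δ)) := add_le_add e1 e2
      _ ≤ 3*s*C2*(δ-ε)/(r*r) + C1*(δ-ε)/(r*r) := by
          rw [b0]
          exact add_le_add (le_of_le_of_eq b1 b1') b2
      _ = m2 := bsum
  have hg1_lip : ∀ a b : ℝ, |g1 a - g1 b| ≤ m2 * |a - b| :=
    aux_two_point (fun t => (hg1d t).differentiableAt) hg1_deriv_bdd
  -- the d-dimensional bump Δ and the product F
  set Δ : Euc d → ℝ := fun w => g1 ‖projn n d hnd.le w‖ with hΔdef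
  set F : Euc d → ℝ := fun w => Δ w * K w with hFdef
  have hΔ_lip : ∀ w1 w2 : Euc d, |Δ w1 - Δ w2| ≤ m2 * ‖w1 - w2‖ := by
    intro w1 w2
    calc |Δ w1 - Δ w2| ≤ m2 * |‖projn n d hnd.le w1‖ - ‖projn n d hnd.le w2‖| :=
          hg1_lip _ _
      _ ≤ m2 * ‖w1 - w2‖ := by
          apply mul_le_mul_of_nonneg_left _ hm2nn
          calc |‖projn n d hnd.le w1‖ - ‖projn n d hnd.le w2‖|
              ≤ ‖projn n d hnd.le w1 - projn n d hnd.le w2‖ := abs_norm_sub_norm_le _ _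
            _ = ‖projn n d hnd.le (w1 - w2)‖ := by rw [projn_sub]
            _ ≤ ‖w1 - w2‖ := projn_norm_le _ _ _ _
  have hΔ_bdd : ∀ w : Euc d, |Δ w| ≤ m1 := fun w => hg1_bdd _
  have hΔ_lo : ∀ w : Euc d, Δ w ≠ 0 → 2.1*s*ε ≤ ‖projn n d hnd.le w‖ :=
    fun w hw => le_of_not_gt fun hc => hw (hg1_lo _ hc)
  have hΔ_hi : ∀ w : Euc d, Δ w ≠ 0 → ‖projn n d hnd.le w‖ ≤ 3*s*δ :=
    fun w hw => le_of_not_gt fun hc => hw (hg1_hi _ hc.le)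
  have hΔ_norm : ∀ w : Euc d, Δ w ≠ 0 → 2*r ≤ ‖w‖ := by
    intro w hw
    calc 2*r ≤ 2.1*s*ε := by nlinarith [mul_le_mul hs1 hεr hr.le hs0.le]
      _ ≤ ‖projn n d hnd.le w‖ := hΔ_lo w hw
      _ ≤ ‖w‖ := projn_norm_le _ _ _ _
  -- kernel bounds
  have hne : ∀ w : Euc d, r ≤ ‖w‖ → w ≠ 0 := by
    intro w hw h0
    rw [h0, norm_zero] at hw
    linarith
  have hKb : ∀ w : Euc d, r ≤ ‖w‖ → |K w| ≤ CK / r^n := by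
    intro w hw
    calc |K w| ≤ CK / ‖w‖^n := hK.bound w (hne w hw)
      _ ≤ CK / r^n :=
        div_le_div_of_nonneg_left hK.pos.le (pow_pos hr n) (pow_le_pow_left₀ hr.le hw n)
  have hKd : ∀ w : Euc d, r ≤ ‖w‖ → ‖fderiv ℝ K w‖ ≤ CK / r^(n+1) := by
    intro w hw
    calc ‖fderiv ℝ K w‖ ≤ CK / ‖w‖^(n+1) := hK.fderiv_bound w (hne w hw)
      _ ≤ CK / r^(n+1) :=
        div_le_div_of_nonneg_left hK.pos.le (pow_pos hr _) (pow_le_pow_left₀ hr.le hw _)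
  have hK_lip : ∀ w1 w2 : Euc d, 2*r ≤ ‖w1‖ → ‖w1 - w2‖ ≤ r →
      |K w1 - K w2| ≤ (CK / r^(n+1)) * ‖w1 - w2‖ := by
    intro w1 w2 h1 h2
    have hball : ∀ u ∈ Metric.closedBall w1 r, r ≤ ‖u‖ := by
      intro u hu
      rw [Metric.mem_closedBall, dist_eq_norm] at hu
      have h3 : ‖w1‖ - ‖u‖ ≤ ‖w1 - u‖ := norm_sub_norm_le _ _
      rw [norm_sub_rev] at h3
      linarith
    have hdiff : ∀ u ∈ Metric.closedBall w1 r, DifferentiableAt ℝ K u :=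
      fun u hu => hK.diff u (hne u (hball u hu))
    have hbd : ∀ u ∈ Metric.closedBall w1 r, ‖fderiv ℝ K u‖ ≤ CK / r^(n+1) :=
      fun u hu => hKd u (hball u hu)
    have hw2m : w2 ∈ Metric.closedBall w1 r := by
      rw [Metric.mem_closedBall, dist_eq_norm, norm_sub_rev]
      exact h2
    have := Convex.norm_image_sub_le_of_norm_fderiv_le hdiff hbd
      (convex_closedBall _ _) hw2m (Metric.mem_closedBall_self hr.le)
    simpa [Real.norm_eq_abs] using this
  -- the global Lipschitz constant
  set M0 : ℝ := CK * (3*m1 + m2*r) / r^(n+1) with hM0def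
  have hadd0 : (0:ℝ) ≤ 3*m1 + m2*r :=
    add_nonneg (mul_nonneg (by norm_num) hm1nn) (mul_nonneg hm2nn hr.le)
  have hM0nn : 0 ≤ M0 :=
    div_nonneg (mul_nonneg hK.pos.le hadd0) (pow_nonneg hr.le _)
  have hrn : (0:ℝ) < r^n := pow_pos hr n
  have hrn1 : (0:ℝ) < r^(n+1) := pow_pos hr (n+1)
  have hFval : ∀ w : Euc d, |F w| ≤ m1 * (CK / r^n) := by
    intro w
    by_cases hw : Δ w = 0
    · rw [hFdef]
      simp only [hw, zero_mul, abs_zero]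
      exact mul_nonneg hm1nn (div_nonneg hK.pos.le hrn.le)
    · have hwn : r ≤ ‖w‖ := le_trans (by linarith) (hΔ_norm w hw)
      rw [hFdef]
      simp only [abs_mul]
      exact mul_le_mul (hΔ_bdd w) (hKb w hwn) (abs_nonneg _) hm1nn
  have hF_key : ∀ w1 w2 : Euc d, |F w1 - F w2| ≤ M0 * ‖w1 - w2‖ := by
    have haux : ∀ w1 w2 : Euc d, Δ w1 ≠ 0 → |F w1 - F w2| ≤ M0 * ‖w1 - w2‖ := by
      intro w1 w2 hw1
      rcases le_or_gt r ‖w1 - w2‖ with hfar | hnear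
      · have htri : |F w1 - F w2| ≤ |F w1| + |F w2| := abs_sub _ _
        have hMr : M0 * r = CK*(3*m1+m2*r)/r^n := by
          rw [hM0def, pow_succ]; field_simp
        have hstep : m1 * (CK / r^n) + m1 * (CK / r^n) ≤ M0 * r := by
          rw [hMr, show m1 * (CK / r^n) + m1 * (CK / r^n) = 2*m1*CK / r^n by ring]
          apply div_le_div₀ (mul_nonneg hK.pos.le hadd0) _ hrn le_rfl
          nlinarith [mul_nonneg hK.pos.le hm1nn, mul_nonneg (mul_nonneg hK.pos.le hm2nn) hr.le]
        calc |F w1 - F w2| ≤ |F w1| + |F w2| := htri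
          _ ≤ m1 * (CK / r^n) + m1 * (CK / r^n) := add_le_add (hFval _) (hFval _)
          _ ≤ M0 * r := hstep
          _ ≤ M0 * ‖w1 - w2‖ := mul_le_mul_of_nonneg_left hfar hM0nn
      · have h2r1 : 2*r ≤ ‖w1‖ := hΔ_norm w1 hw1
        have hKl := hK_lip w1 w2 h2r1 hnear.le
        have hw2r : r ≤ ‖w2‖ := by
          have h3 : ‖w1‖ - ‖w2‖ ≤ ‖w1 - w2‖ := norm_sub_norm_le _ _
          linarith
        have hK2 := hKb w2 hw2r
        have hΔl := hΔ_lip w1 w2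
        have hΔ1 := hΔ_bdd w1
        have hident : F w1 - F w2 = Δ w1 * (K w1 - K w2) + K w2 * (Δ w1 - Δ w2) := by
          rw [hFdef]; ring
        rw [hident]
        have hCKr : (0:ℝ) ≤ CK / r^n := div_nonneg hK.pos.le hrn.le
        have hsum : m1 * (CK/r^(n+1)) + (CK/r^n)*m2 ≤ M0 := by
          have e : M0 = 3*(m1*(CK/r^(n+1))) + (CK/r^n)*m2 := by
            rw [hM0def, pow_succ]; field_simp
          rw [e]
          nlinarith [mul_nonneg hm1nn (div_nonneg hK.pos.le hrn1.le)]
        calc |Δ w1 * (K w1 - K w2) + K w2 * (Δ w1 - Δ w2)|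
            ≤ |Δ w1 * (K w1 - K w2)| + |K w2 * (Δ w1 - Δ w2)| := abs_add_le _ _
          _ ≤ m1 * ((CK/r^(n+1)) * ‖w1-w2‖) + (CK/r^n) * (m2 * ‖w1-w2‖) := by
              rw [abs_mul, abs_mul]
              exact add_le_add
                (mul_le_mul hΔ1 hKl (abs_nonneg _) hm1nn)
                (mul_le_mul hK2 hΔl (abs_nonneg _) hCKr)
          _ = (m1 * (CK/r^(n+1)) + (CK/r^n)*m2) * ‖w1-w2‖ := by ring
          _ ≤ M0 * ‖w1-w2‖ := mul_le_mul_of_nonneg_right hsum (norm_nonneg _)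
    intro w1 w2
    by_cases h1 : Δ w1 = 0
    · by_cases h2 : Δ w2 = 0
      · have h0 : F w1 - F w2 = 0 := by rw [hFdef]; simp [h1, h2]
        rw [h0, abs_zero]
        exact mul_nonneg hM0nn (norm_nonneg _)
      · calc |F w1 - F w2| = |F w2 - F w1| := abs_sub_comm _ _
          _ ≤ M0 * ‖w2 - w1‖ := haux _ _ h2
          _ = M0 * ‖w1 - w2‖ := by rw [norm_sub_rev]
    · exact haux w1 w2 h1
  -- comparing M0 with the final constant
  set M : ℝ := Cc * 2^(n+2) * (2:ℝ)^(j*((n:ℤ)+2)) * (δ-ε) with hMdef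
  have hMpos : 0 < M := by
    rw [hMdef]
    have h1 : (0:ℝ) < (2:ℝ)^(n+2) := by positivity
    have h2 : (0:ℝ) < (2:ℝ)^(j*((n:ℤ)+2)) := by positivity
    exact mul_pos (mul_pos (mul_pos hCcpos h1) h2) hδε
  have hrp : r^(n+2) = (2:ℝ)^((-j-1)*((n:ℤ)+2)) := by
    rw [hrdef, ← zpow_natCast ((2:ℝ)^(-j-1)) (n+2), ← zpow_mul]
    congr 1 <;> push_cast <;> ring
  have h2n : (2:ℝ)^(n+2) = (2:ℝ)^(((n:ℤ))+2) := by
    rw [← zpow_natCast (2:ℝ) (n+2)]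
    congr 1 <;> push_cast <;> ring
  have hpow : r^(n+2) * ((2:ℝ)^(n+2) * (2:ℝ)^(j*((n:ℤ)+2))) = 1 := by
    rw [hrp, h2n, ← zpow_add₀ (by norm_num : (2:ℝ) ≠ 0),
      ← zpow_add₀ (by norm_num : (2:ℝ) ≠ 0),
      show (-j-1)*((n:ℤ)+2) + (((n:ℤ)+2) + j*((n:ℤ)+2)) = 0 by ring]
    exact zpow_zero 2
  have hrn2 : (0:ℝ) < r^(n+2) := pow_pos hr _
  have hM' : M = Cc * (δ-ε) / r^(n+2) := by
    rw [eq_div_iff hrn2.ne', hMdef]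
    linear_combination (Cc*(δ-ε)) * hpow
  have hM0' : M0 = (CK*(9*s*C1 + 3*s*C2 + C1)) * (δ-ε) / r^(n+2) := by
    rw [hM0def, hm1def, hm2def]
    field_simp
    ring
  have hM0M : M0 ≤ M := by
    rw [hM0', hM']
    apply div_le_div₀ (mul_nonneg hCcpos.le hδε.le) _ hrn2 le_rfl
    apply mul_le_mul_of_nonneg_right _ hδε.le
    rw [hCcdef]
    linarith
  -- the normalized test function
  set g : Euc d → ℝ := fun y => M⁻¹ * F (x - y) with hgdef
  have hg_lip : LipschitzWith 1 g := by
    apply LipschitzWith.of_dist_le_mul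
    intro y1 y2
    rw [Real.dist_eq, NNReal.coe_one, one_mul, hgdef]
    simp only
    rw [← mul_sub, abs_mul, abs_of_pos (inv_pos.mpr hMpos)]
    have hnorm : ‖(x - y1) - (x - y2)‖ = dist y1 y2 := by
      rw [dist_eq_norm, show (x - y1) - (x - y2) = -(y1 - y2) by abel, norm_neg]
    have hFb : |F (x - y1) - F (x - y2)| ≤ M * dist y1 y2 := by
      calc |F (x-y1) - F (x-y2)| ≤ M0 * ‖(x-y1) - (x-y2)‖ := hF_key _ _
        _ ≤ M * ‖(x-y1) - (x-y2)‖ := mul_le_mul_of_nonneg_right hM0M (norm_nonneg _)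
        _ = M * dist y1 y2 := by rw [hnorm]
    calc M⁻¹ * |F (x-y1) - F (x-y2)| ≤ M⁻¹ * (M * dist y1 y2) :=
          mul_le_mul_of_nonneg_left hFb (inv_nonneg.mpr hMpos.le)
      _ = dist y1 y2 := by field_simp
  have hg_supp : Function.support g ⊆ BQ n d hnd.le CΓ z ((2:ℝ)^(-j)) := by
    intro y hy
    have hF0 : F (x - y) ≠ 0 := by
      intro h0
      apply hy
      rw [hgdef]
      simp only [h0, mul_zero]
    have hΔxy : Δ (x - y) ≠ 0 := by
      intro h0
      apply hF0
      rw [hFdef]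
      simp [h0]
    have hpb : ‖projn n d hnd.le (x - y)‖ ≤ 3*s*δ := hΔ_hi _ hΔxy
    show dist (projn n d hnd.le y) z ≤ CΓ * (2:ℝ)^(-j)
    have hxz : dist (projn n d hnd.le x) z ≤ s * ((2:ℝ)^(-j)/2) := by
      rw [dist_eq_norm]
      apply euc_norm_le_of_coord _ (by positivity)
      intro i
      have hi := hxQ i
      have hco : (projn n d hnd.le x - z) i = projn n d hnd.le x i - z i := rfl
      rw [hco]
      rw [abs_le]
      constructor
      · linarith [hi.1]
      · linarith [hi.2.le]
    have hyx : dist (projn n d hnd.le y) (projn n d hnd.le x) ≤ 3*s*δ := by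
      rw [dist_eq_norm]
      have hneg : projn n d hnd.le y - projn n d hnd.le x = -(projn n d hnd.le (x - y)) := by
        rw [projn_sub]; abel
      rw [hneg, norm_neg]
      exact hpb
    calc dist (projn n d hnd.le y) z
        ≤ dist (projn n d hnd.le y) (projn n d hnd.le x) + dist (projn n d hnd.le x) z :=
          dist_triangle _ _ _
      _ ≤ 3*s*δ + s * ((2:ℝ)^(-j)/2) := add_le_add hyx hxz
      _ ≤ CΓ * (2:ℝ)^(-j) := by
          rw [h2r]
          nlinarith [mul_nonneg hs0.le hr.le, mul_le_mul_of_nonneg_right hCΓ hr.le,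
            mul_le_mul_of_nonneg_left hδr.le hs0.le]
  -- relating the integrals
  have hwd : ENNReal.ofReal
      |(∫ y, g y ∂(lipGraphMeasure n d hnd.le A f)) -
        ∫ y, g y ∂((c : ℝ≥0∞) • (μH[(n : ℝ)]).restrict L)|
      ≤ wdist d (BQ n d hnd.le CΓ z ((2:ℝ)^(-j)))
          (lipGraphMeasure n d hnd.le A f) ((c : ℝ≥0∞) • (μH[(n : ℝ)]).restrict L) := by
    unfold wdist
    exact le_iSup_of_le g (le_iSup_of_le hg_lip (le_iSup_of_le hg_supp le_rfl))
  have hint : ∀ ν : Measure (Euc d), ∫ y, g y ∂ν = M⁻¹ * ∫ y, F (x - y) ∂ν := by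
    intro ν
    rw [hgdef]
    exact integral_const_mul _ _
  have hno : (fun y => (phiE n d hnd.le φR ε (x - y) -
      phiE n d hnd.le φR δ (x - y)) * K (x - y)) = fun y => F (x - y) := by
    funext y
    rw [hFdef, hΔdef, hg1def]
    rfl
  rw [hno]
  have habs2 : |(∫ y, F (x - y) ∂(lipGraphMeasure n d hnd.le A f)) -
      ∫ y, F (x - y) ∂((c : ℝ≥0∞) • (μH[(n : ℝ)]).restrict L)|
      = M * |(∫ y, g y ∂(lipGraphMeasure n d hnd.le A f)) -
          ∫ y, g y ∂((c : ℝ≥0∞) • (μH[(n : ℝ)]).restrict L)| := by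
    rw [hint, hint, ← mul_sub, abs_mul, abs_of_pos (inv_pos.mpr hMpos)]
    field_simp
  rw [habs2, ENNReal.ofReal_mul hMpos.le]
  exact mul_le_mul_right hwd _
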